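/- arXiv:2604.05148 — 3 statements merged into one kernel-verified Lean document; each statement's English description precedes it below -/
import Mathlib

section
/- Let F be a field of characteristic p > 0, let s ∈ F with s ≠ 0, and set t = s^p. Then the maps f(x,y) = y − s·x and g(u) = ((u^p − u)/s, u^p) are mutually inverse additive bijections between the set U(F) = {(x,y) ∈ F² : y^p − y = t·x^p} and F. In particular g(u) ∈ U(F) for every u ∈ F, f(g(u)) = u, and g(f(x,y)) = (x,y) whenever y^p − y = t·x^p. -/
theorem stmt_2 (F : Type*) [Field F] (p : ℕ) [Fact p.Prime] [CharP F p]
    (s : F) (hs : s ≠ 0) (t : F) (ht : t = s ^ p) :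
    (∀ u : F, (u ^ p) ^ p - u ^ p = t * ((u ^ p - u) / s) ^ p
        ∧ (u ^ p) - s * ((u ^ p - u) / s) = u)
    ∧ (∀ x y : F, y ^ p - y = t * x ^ p →
        ((y - s * x) ^ p - (y - s * x)) / s = x ∧ (y - s * x) ^ p = y)
    ∧ (∀ x₁ y₁ x₂ y₂ : F,
        (y₁ + y₂) - s * (x₁ + x₂) = (y₁ - s * x₁) + (y₂ - s * x₂)) := by
  refine ⟨fun u => ⟨?_, ?_⟩, fun x y h => ?_, fun x₁ y₁ x₂ y₂ => by ring⟩
  · rw [ht, div_pow, mul_div_assoc', mul_comm, mul_div_assoc, div_self (pow_ne_zero _ hs),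
      mul_one, sub_pow_char]
  · field_simp; ring
  · have hp : (y - s * x) ^ p = y := by
      rw [sub_pow_char, mul_pow, ← ht, ← h]; ring
    refine ⟨?_, hp⟩
    rw [hp]
    field_simp; ring
end

section
/- Let k be a field of characteristic p > 2 and K = k((t)). For every a ∈ k with a ≠ 0, there exist no x, y ∈ K such that a·t^{−1} + t·x^p = y^p − y. Equivalently, a·t^{−1} does not lie in the additive subgroup ℘(K) + t·K^p. -/
/-- If `x` is nonzero and has strictly smaller orderTop than `y`, then `x + y` is nonzero
and has the same order as `x`. -/
lemma aux_order_add_eq_left {k : Type*} [Field k] {x y : HahnSeries ℤ k}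
    (hx : x ≠ 0) (h : x.orderTop < y.orderTop) :
    x + y ≠ 0 ∧ (x + y).order = x.order := by
  have hsum : (x + y).orderTop = x.orderTop := HahnSeries.orderTop_add_eq_left h
  have hne : x + y ≠ 0 := by
    intro h0
    rw [h0, HahnSeries.orderTop_zero, ← HahnSeries.order_eq_orderTop_of_ne_zero hx] at hsum
    exact (WithTop.coe_ne_top (a := x.order)) hsum.symm
  refine ⟨hne, ?_⟩
  have := (HahnSeries.order_eq_orderTop_of_ne_zero hne).trans
    (hsum.trans (HahnSeries.order_eq_orderTop_of_ne_zero hx).symm)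
  exact_mod_cast this

theorem stmt_4 (k : Type*) [Field k] (p : ℕ) [Fact p.Prime] [CharP k p] (hp : 2 < p)
    (a : k) (ha : a ≠ 0) :
    ¬ ∃ x y : LaurentSeries k,
      HahnSeries.single (-1 : ℤ) a + HahnSeries.single (1 : ℤ) (1 : k) * x ^ p
        = y ^ p - y := by
  rintro ⟨x, y, hxy⟩
  have hpz : (3 : ℤ) ≤ (p : ℤ) := by exact_mod_cast hp
  have hpne : p ≠ 0 := by omega
  have hsingle : (HahnSeries.single (-1 : ℤ) a).order = -1 := HahnSeries.order_single ha
  have hsnz : (HahnSeries.single (-1 : ℤ) a : LaurentSeries k) ≠ 0 :=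
    HahnSeries.single_ne_zero ha
  -- Step 1: LHS ≠ 0, its order is -1 or 1 + p * x.order, and is ≤ -1.
  have hLfacts : (HahnSeries.single (-1 : ℤ) a
        + HahnSeries.single (1 : ℤ) (1 : k) * x ^ p) ≠ 0 ∧
      ((HahnSeries.single (-1 : ℤ) a + HahnSeries.single (1 : ℤ) (1 : k) * x ^ p).order = -1 ∨
        (HahnSeries.single (-1 : ℤ) a + HahnSeries.single (1 : ℤ) (1 : k) * x ^ p).order
          = 1 + p * x.order) ∧
      (HahnSeries.single (-1 : ℤ) a + HahnSeries.single (1 : ℤ) (1 : k) * x ^ p).order ≤ -1 := by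
    by_cases hx : x = 0
    · rw [hx, zero_pow hpne, mul_zero, add_zero, hsingle]
      exact ⟨hsnz, Or.inl rfl, le_refl _⟩
    · have hxp : x ^ p ≠ 0 := pow_ne_zero _ hx
      have hgnz : (HahnSeries.single (1 : ℤ) (1 : k)) * x ^ p ≠ 0 :=
        mul_ne_zero (HahnSeries.single_ne_zero one_ne_zero) hxp
      have hgo : ((HahnSeries.single (1 : ℤ) (1 : k)) * x ^ p).order = 1 + p * x.order := by
        rw [HahnSeries.order_mul (HahnSeries.single_ne_zero one_ne_zero) hxp,
          HahnSeries.order_single one_ne_zero, HahnSeries.order_pow]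
        simp [nsmul_eq_mul]
      have hneq : (1 + (p : ℤ) * x.order) ≠ -1 := by
        intro h
        have hdvd : (p : ℤ) ∣ 2 := ⟨-x.order, by linarith⟩
        have := Int.le_of_dvd (by norm_num) hdvd
        linarith
      rcases lt_or_gt_of_ne hneq with hlt | hgt
      · have h1 : ((HahnSeries.single (1 : ℤ) (1 : k)) * x ^ p).orderTop
            < (HahnSeries.single (-1 : ℤ) a).orderTop := by
          rw [← HahnSeries.order_eq_orderTop_of_ne_zero hsnz,
            ← HahnSeries.order_eq_orderTop_of_ne_zero hgnz, hsingle, hgo]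
          exact_mod_cast hlt
        obtain ⟨hne, hord⟩ := aux_order_add_eq_left hgnz h1
        rw [add_comm] at hne hord
        rw [hgo] at hord
        exact ⟨hne, Or.inr hord, by rw [hord]; linarith⟩
      · have h1 : (HahnSeries.single (-1 : ℤ) a).orderTop
            < ((HahnSeries.single (1 : ℤ) (1 : k)) * x ^ p).orderTop := by
          rw [← HahnSeries.order_eq_orderTop_of_ne_zero hsnz,
            ← HahnSeries.order_eq_orderTop_of_ne_zero hgnz, hsingle, hgo]
          exact_mod_cast hgt
        obtain ⟨hne, hord⟩ := aux_order_add_eq_left hsnz h1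
        rw [hsingle] at hord
        exact ⟨hne, Or.inl hord, le_of_eq hord⟩
  obtain ⟨hLnz, hLor, hLle⟩ := hLfacts
  rw [hxy] at hLnz hLor hLle
  -- Step 2: analyze the RHS y^p - y.
  have hynz : y ≠ 0 := by
    intro h
    rw [h, zero_pow hpne, sub_zero] at hLnz
    exact hLnz rfl
  have hyp_ord : (y ^ p).order = p * y.order := by
    rw [HahnSeries.order_pow]; simp [nsmul_eq_mul]
  rcases lt_or_ge y.order 0 with hneg | hpos
  · -- y.order < 0 : order of RHS is p * y.order
    have hypnz : y ^ p ≠ 0 := pow_ne_zero _ hynz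
    have hpn_lt : (p : ℤ) * y.order < y.order := by nlinarith
    have h1 : (y ^ p).orderTop < (-y).orderTop := by
      rw [← HahnSeries.order_eq_orderTop_of_ne_zero hypnz,
        ← HahnSeries.order_eq_orderTop_of_ne_zero (neg_ne_zero.mpr hynz),
        HahnSeries.order_neg, hyp_ord]
      exact_mod_cast hpn_lt
    obtain ⟨-, hord⟩ := aux_order_add_eq_left hypnz h1
    have hRord : (y ^ p - y).order = p * y.order := by
      rw [sub_eq_add_neg, hord, hyp_ord]
    rw [hRord] at hLor
    rcases hLor with h | h
    · have hdvd : (p : ℤ) ∣ 1 := ⟨-y.order, by linarith⟩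
      have := Int.le_of_dvd one_pos hdvd
      linarith
    · have hdvd : (p : ℤ) ∣ 1 := ⟨y.order - x.order, by ring_nf; linarith⟩
      have := Int.le_of_dvd one_pos hdvd
      linarith
  · -- y.order ≥ 0 : order of RHS ≥ 0 but LHS order ≤ -1
    have h0 : (0 : ℤ) ≤ (y ^ p - y).order := by
      have hmin := HahnSeries.min_order_le_order_add (x := y ^ p) (y := -y)
        (by rw [← sub_eq_add_neg]; exact hLnz)
      rw [← sub_eq_add_neg] at hmin
      refine le_trans ?_ hmin
      rw [hyp_ord, HahnSeries.order_neg]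
      exact le_min (by positivity) hpos
    linarith
end

section
/- Let k be a field of characteristic p > 2 and K = k((t)). The map k → K/(℘(K) + t·K^p) sending a to the class of a·t^{−1} is an injective group homomorphism. -/
open HahnSeries

private lemma hsmall_aux (p : ℕ) (hp : 2 < p) :
    ∀ r e : ℤ, e.natAbs ≤ 2 → e ≠ 0 → (p : ℤ) * r ≠ e := by
  intro r e he he0 hre
  have hple : (3 : ℤ) ≤ (p : ℤ) := by exact_mod_cast hp
  rcases eq_or_ne r 0 with rfl | hr
  · simp at hre; omega
  · have h1 : (1 : ℤ) ≤ |r| := Int.one_le_abs hr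
    have hpe : (p : ℤ) ≤ |e| := by
      calc (p : ℤ) = (p : ℤ) * 1 := by ring
        _ ≤ (p : ℤ) * |r| := by
            exact mul_le_mul_of_nonneg_left h1 (by positivity)
        _ = |(p : ℤ) * r| := by rw [abs_mul, abs_of_nonneg (Int.natCast_nonneg p)]
        _ = |e| := by rw [hre]
    have he2 : |e| ≤ 2 := by rw [Int.abs_eq_natAbs]; omega
    linarith

private lemma key_lemma {k : Type*} [Field k] (p : ℕ) [Fact p.Prime] [CharP k p]
    (hp : 2 < p) {c : k} {x y : LaurentSeries k}
    (h : HahnSeries.single (-1 : ℤ) c = y ^ p - y - HahnSeries.single (1 : ℤ) (1 : k) * x ^ p) :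
    c = 0 := by
  by_contra hc
  have hp0 : p ≠ 0 := Nat.Prime.ne_zero Fact.out
  have hple : (3 : ℤ) ≤ (p : ℤ) := by exact_mod_cast hp
  have hsmall := hsmall_aux p hp
  set T := HahnSeries.single (1 : ℤ) (1 : k) * x ^ p with hT
  have hcoeff : ∀ n : ℤ, (HahnSeries.single (-1 : ℤ) c).coeff n
      = (y ^ p).coeff n - y.coeff n - T.coeff n := by
    intro n; rw [h]; simp [HahnSeries.coeff_sub]
  have hordy : (y ^ p).order = (p : ℤ) * y.order := by
    rw [HahnSeries.order_pow]; simp [nsmul_eq_mul]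
  have hordT : x ≠ 0 → T.order = 1 + (p : ℤ) * x.order := by
    intro hx
    rw [hT, HahnSeries.order_mul (HahnSeries.single_ne_zero one_ne_zero) (pow_ne_zero _ hx),
      HahnSeries.order_single one_ne_zero, HahnSeries.order_pow]
    simp [nsmul_eq_mul]
  rcases eq_or_ne y 0 with rfl | hy
  · rcases eq_or_ne x 0 with rfl | hx
    · have h0 := hcoeff (-1)
      simp [hT, zero_pow hp0] at h0
      exact hc h0
    · have hTne : T ≠ 0 :=
        mul_ne_zero (HahnSeries.single_ne_zero one_ne_zero) (pow_ne_zero _ hx)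
      have h0 := hcoeff T.order
      have hTord : T.order ≠ -1 := by
        rw [hordT hx]; intro hE
        exact hsmall x.order (-2) (by norm_num) (by norm_num) (by linarith)
      rw [HahnSeries.coeff_single_of_ne hTord, zero_pow hp0] at h0
      simp at h0
      exact hTne h0
  · have hyp_ne : y ^ p ≠ 0 := pow_ne_zero _ hy
    set m := y.order with hm
    rcases lt_or_ge m 0 with hmneg | hmpos
    · -- m < 0
      have hpm_lt : (p : ℤ) * m < m := by nlinarith
      have hpm_ne : (p : ℤ) * m ≠ -1 := hsmall m (-1) (by norm_num) (by norm_num)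
      rcases eq_or_ne x 0 with rfl | hx
      · have h0 := hcoeff ((p : ℤ) * m)
        rw [HahnSeries.coeff_single_of_ne hpm_ne,
          HahnSeries.coeff_eq_zero_of_lt_order hpm_lt] at h0
        have hT0 : T = 0 := by rw [hT, zero_pow hp0, mul_zero]
        rw [hT0] at h0
        simp at h0
        exact (fun hne h => mt HahnSeries.coeff_order_eq_zero.mp hne h) hyp_ne (by rw [hordy]; exact h0.symm)
      · have hTne : T ≠ 0 :=
          mul_ne_zero (HahnSeries.single_ne_zero one_ne_zero) (pow_ne_zero _ hx)
        set r := x.order with hr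
        rcases lt_trichotomy (1 + (p : ℤ) * r) ((p : ℤ) * m) with hlt | heq | hgt
        · -- T.order < (y^p).order : evaluate at T.order
          have h0 := hcoeff T.order
          have hTord : T.order ≠ -1 := by
            rw [hordT hx]; intro hE
            exact hsmall r (-2) (by norm_num) (by norm_num) (by linarith)
          rw [HahnSeries.coeff_single_of_ne hTord,
            HahnSeries.coeff_eq_zero_of_lt_order (x := y ^ p) (by rw [hordy, hordT hx]; exact hlt),
            HahnSeries.coeff_eq_zero_of_lt_order (x := y)
              (by rw [hordT hx]; exact lt_trans hlt hpm_lt)] at h0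
          simp at h0
          exact hTne h0
        · -- impossible: p * (m - r) = 1
          exact hsmall (m - r) 1 (by norm_num) (by norm_num) (by ring_nf; linarith) |>.elim
        · -- (y^p).order < T.order : evaluate at p*m
          have h0 := hcoeff ((p : ℤ) * m)
          rw [HahnSeries.coeff_single_of_ne hpm_ne,
            HahnSeries.coeff_eq_zero_of_lt_order hpm_lt,
            HahnSeries.coeff_eq_zero_of_lt_order (x := T) (by rw [hordT hx]; exact hgt)] at h0
          simp at h0
          exact (fun hne h => mt HahnSeries.coeff_order_eq_zero.mp hne h) hyp_ne (by rw [hordy]; exact h0.symm)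
    · -- m ≥ 0
      have hyp_coeff : (y ^ p).coeff (-1) = 0 := by
        apply HahnSeries.coeff_eq_zero_of_lt_order
        rw [hordy]; nlinarith
      have hy_coeff : y.coeff (-1) = 0 :=
        HahnSeries.coeff_eq_zero_of_lt_order (by omega)
      rcases eq_or_ne x 0 with rfl | hx
      · have h0 := hcoeff (-1)
        have hT0 : T = 0 := by rw [hT, zero_pow hp0, mul_zero]
        rw [HahnSeries.coeff_single_same, hyp_coeff, hy_coeff, hT0] at h0
        simp at h0
        exact hc h0
      · have hTne : T ≠ 0 :=
          mul_ne_zero (HahnSeries.single_ne_zero one_ne_zero) (pow_ne_zero _ hx)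
        set r := x.order with hr
        rcases lt_or_ge r 0 with hrneg | hrpos
        · -- evaluate at T.order = 1 + p*r < -1
          have hTr : (1 : ℤ) + (p : ℤ) * r < -1 := by nlinarith
          have h0 := hcoeff T.order
          rw [HahnSeries.coeff_single_of_ne (by rw [hordT hx]; omega),
            HahnSeries.coeff_eq_zero_of_lt_order (x := y ^ p)
              (by rw [hordy, hordT hx]; nlinarith),
            HahnSeries.coeff_eq_zero_of_lt_order (x := y)
              (by rw [hordT hx]; omega)] at h0
          simp at h0
          exact hTne h0
        · -- evaluate at -1
          have h0 := hcoeff (-1)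
          rw [HahnSeries.coeff_single_same, hyp_coeff, hy_coeff,
            HahnSeries.coeff_eq_zero_of_lt_order (x := T)
              (by rw [hordT hx]; nlinarith)] at h0
          simp at h0
          exact hc h0

theorem stmt_5 (k : Type*) [Field k] (p : ℕ) [Fact p.Prime] [CharP k p] (hp : 2 < p)
    (S : AddSubgroup (LaurentSeries k))
    (hS : (S : Set (LaurentSeries k)) =
      {z | ∃ x y : LaurentSeries k,
        z = y ^ p - y - HahnSeries.single (1 : ℤ) (1 : k) * x ^ p}) :
    Function.Injective
      (fun a : k => (QuotientAddGroup.mk (HahnSeries.single (-1 : ℤ) a) : LaurentSeries k ⧸ S))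
    ∧ ∀ a b : k,
      (QuotientAddGroup.mk (HahnSeries.single (-1 : ℤ) (a + b)) : LaurentSeries k ⧸ S)
        = QuotientAddGroup.mk (HahnSeries.single (-1 : ℤ) a)
          + QuotientAddGroup.mk (HahnSeries.single (-1 : ℤ) b) := by
  constructor
  · intro a b hab
    simp only [QuotientAddGroup.eq] at hab
    have hsub : -(HahnSeries.single (-1 : ℤ) a) + HahnSeries.single (-1 : ℤ) b
        = HahnSeries.single (-1 : ℤ) (b - a) := by
      ext n
      simp [HahnSeries.coeff_single]
      split_ifs <;> ring
    rw [hsub] at hab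
    rw [← SetLike.mem_coe, hS] at hab
    obtain ⟨x, y, hxy⟩ := hab
    have := key_lemma p hp hxy
    exact (sub_eq_zero.mp this).symm
  · intro a b
    have hadd : HahnSeries.single (-1 : ℤ) (a + b)
        = HahnSeries.single (-1 : ℤ) a + HahnSeries.single (-1 : ℤ) b := by
      ext n
      simp [HahnSeries.coeff_single]
    rw [hadd]
    rfl
end
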